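/- In the NOT-gadget economy (n_x > 4α students demanding {c_x, c_{1-x}}, capacity q_{1-x} = n_x/2, at most n_x/4 outside students interested in c_{1-x}), if the price satisfies p*_{1-x} > 1 - p*_x + β in a price vector with budgets in [1,1+β], then the course c_{1-x} is undersubscribed by at least n_x/4 seats, i.e., the clearing error satisfies ‖z‖₂ ≥ n_x/4. -/

import Mathlib

open Finset

/-- An economy: course capacities and, for each student, an ordered list
(most preferred first) of permissible course bundles. -/
structure Econ (N M : ℕ) where
  q : Fin M → ℕ
  pref : Fin N → List (Finset (Fin M))

/-- Total price of a bundle. -/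
def cost {M : ℕ} (p : Fin M → ℝ) (S : Finset (Fin M)) : ℝ := ∑ j ∈ S, p j

/-- `Chooses p bdg l S`: `S` is the most preferred affordable bundle in the
ordered list `l` (most preferred first) at prices `p` with budget `bdg`
(`S = ∅` if no listed bundle is affordable). -/
def Chooses {M : ℕ} (p : Fin M → ℝ) (bdg : ℝ) (l : List (Finset (Fin M)))
    (S : Finset (Fin M)) : Prop :=
  (S = ∅ ∧ ∀ T ∈ l, ¬ cost p T ≤ bdg) ∨
  (S ∈ l ∧ cost p S ≤ bdg ∧ ∀ T ∈ l.take (l.idxOf S), ¬ cost p T ≤ bdg)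

/-- Number of students enrolled in course `j`. -/
def enroll {N M : ℕ} (x : Fin N → Finset (Fin M)) (j : Fin M) : ℕ :=
  (univ.filter fun i => j ∈ x i).card

/-- Clearing error of course `j`: oversubscription always counts; for a
positively priced course undersubscription counts as well. -/
noncomputable def zerr {N M : ℕ} (E : Econ N M) (p : Fin M → ℝ) (x : Fin N → Finset (Fin M))
    (j : Fin M) : ℝ :=
  if 0 < p j then (enroll x j : ℝ) - E.q j
  else max ((enroll x j : ℝ) - E.q j) 0

/-- L2 norm of the clearing-error vector. -/
noncomputable def clearErr {N M : ℕ} (E : Econ N M) (p : Fin M → ℝ)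
    (x : Fin N → Finset (Fin M)) : ℝ :=
  Real.sqrt (∑ j, (zerr E p x j) ^ 2)

/-- An `(α,β)`-CEEI: nonnegative prices, budgets in `[1,1+β]`, every student
is allocated her most preferred affordable bundle, and the total clearing
error is at most `α`. -/
structure IsCEEI {N M : ℕ} (E : Econ N M) (α β : ℝ) (p : Fin M → ℝ)
    (b : Fin N → ℝ) (x : Fin N → Finset (Fin M)) : Prop where
  price_nonneg : ∀ j, 0 ≤ p j
  budget : ∀ i, 1 ≤ b i ∧ b i ≤ 1 + β
  alloc : ∀ i, Chooses p (b i) (E.pref i) (x i)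
  clearing : clearErr E p x ≤ α

/-- Student `i` is interested in course `j` (lists some bundle containing it). -/
def Interested {N M : ℕ} (E : Econ N M) (j : Fin M) (i : Fin N) : Prop :=
  ∃ S ∈ E.pref i, j ∈ S

/-- **NOT gadget, overpriced case.** In the NOT-gadget economy, if
`p cout > 1 - p cx + β` (the output course being positively priced), with
budgets in `[1,1+β]` and every student allocated her most preferred
affordable bundle, then `cout` is undersubscribed by at least `nx/4` seats,
so the clearing error satisfies `‖z‖₂ ≥ nx/4`. -/
theorem not_gadget_overpriced {N M : ℕ} (E : Econ N M) (β : ℝ) (cx cout : Fin M)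
    (hne : cx ≠ cout) (nx : ℕ)
    (A : Finset (Fin N)) (hAcard : A.card = nx)
    (hApref : ∀ i ∈ A, E.pref i = [({cx, cout} : Finset (Fin M))])
    (hq : (E.q cout : ℝ) = nx / 2)
    (hother : (({i | i ∉ A ∧ Interested E cout i} : Set (Fin N)).ncard : ℝ) ≤ nx / 4)
    (p : Fin M → ℝ) (hpnn : ∀ j, 0 ≤ p j) (hppos : 0 < p cout)
    (b : Fin N → ℝ) (hb : ∀ i, 1 ≤ b i ∧ b i ≤ 1 + β)
    (x : Fin N → Finset (Fin M)) (halloc : ∀ i, Chooses p (b i) (E.pref i) (x i))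
    (hover : p cout > 1 - p cx + β) :
    (nx : ℝ) / 4 ≤ clearErr E p x := by
  have hcost : cost p ({cx, cout} : Finset (Fin M)) = p cx + p cout :=
    Finset.sum_pair hne
  have hA0 : ∀ i ∈ A, x i = ∅ := by
    intro i hi
    have h := halloc i
    rw [hApref i hi] at h
    rcases h with ⟨h, _⟩ | ⟨hmem, hc, _⟩
    · exact h
    · exfalso
      simp only [List.mem_singleton] at hmem
      rw [hmem, hcost] at hc
      have := (hb i).2
      linarith
  have hsub : ((univ.filter fun i => cout ∈ x i : Finset (Fin N)) : Set (Fin N))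
      ⊆ {i | i ∉ A ∧ Interested E cout i} := by
    intro i hi
    simp only [coe_filter, Set.mem_setOf_eq, mem_univ, true_and] at hi
    have hiA : i ∉ A := fun hA => by simp [hA0 i hA] at hi
    refine ⟨hiA, ?_⟩
    rcases halloc i with ⟨h, _⟩ | ⟨hm, _, _⟩
    · rw [h] at hi; simp at hi
    · exact ⟨x i, hm, hi⟩
  have henroll : (enroll x cout : ℝ) ≤ (nx : ℝ) / 4 := by
    refine le_trans ?_ hother
    have h1 : enroll x cout ≤ ({i | i ∉ A ∧ Interested E cout i} : Set (Fin N)).ncard := by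
      rw [enroll, ← Set.ncard_coe_finset]
      exact Set.ncard_le_ncard hsub (Set.toFinite _)
    exact_mod_cast h1
  have hz : zerr E p x cout ≤ -((nx : ℝ) / 4) := by
    rw [zerr, if_pos hppos, hq]
    linarith
  have habs : (nx : ℝ) / 4 ≤ |zerr E p x cout| := by
    calc (nx : ℝ) / 4 ≤ -(zerr E p x cout) := by linarith
    _ ≤ |zerr E p x cout| := neg_le_abs _
  calc (nx : ℝ) / 4 ≤ |zerr E p x cout| := habs
  _ = Real.sqrt ((zerr E p x cout) ^ 2) := (Real.sqrt_sq_eq_abs _).symm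
  _ ≤ clearErr E p x := by
      apply Real.sqrt_le_sqrt
      exact Finset.single_le_sum (f := fun j => (zerr E p x j) ^ 2)
        (fun j _ => sq_nonneg _) (mem_univ cout)
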